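/- If (k1,k2,q1,q2) is an integer quadruple with k1 > k2 ≥ 1, 0 ≤ q1 < k1, 0 ≤ q2 < k2, and k1·k2 − k1·q2 − k2·q1 = 1, then k2 ≤ q1 + q2 and q1 + q2 < k1. -/
import Mathlib

theorem stmt7 (k1 k2 q1 q2 : ℤ) (hk2 : 1 ≤ k2) (hk1 : k2 < k1)
    (hq1 : 0 ≤ q1) (hq1' : q1 < k1) (hq2 : 0 ≤ q2) (hq2' : q2 < k2)
    (heq : k1 * k2 - k1 * q2 - k2 * q1 = 1) :
    k2 ≤ q1 + q2 ∧ q1 + q2 < k1 := by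
  constructor
  · by_contra h
    push_neg at h
    nlinarith [mul_nonneg (sub_nonneg.2 hk1.le) (sub_nonneg.2 hq2'.le),
      mul_le_mul_of_nonneg_left (show q1 ≤ k2 - 1 - q2 by omega) (by omega : (0:ℤ) ≤ k2)]
  · by_contra h
    push_neg at h
    nlinarith [mul_le_mul_of_nonneg_left (show k1 - q2 ≤ q1 by omega) (by omega : (0:ℤ) ≤ k2)]
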